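/- Let γ > 1 and b be real constants, and let R1, R2 : I → ℝ be differentiable on an interval I, with R2 > 0 on I, satisfying R1' = -R1² + b R2² and R2' = -((γ+1)/2) R1 R2. Then the function E(t) = (R1(t)² + (2b/(γ-1)) R2(t)²) · R2(t)^{-4/(γ+1)} is constant on I. -/

import Mathlib

open Real

theorem first_integral_gamma_gt_one (γ b : ℝ) (hγ : 1 < γ) (I : Set ℝ)
    (hI : I.OrdConnected) (R1 R2 : ℝ → ℝ)
    (hpos : ∀ t ∈ I, 0 < R2 t)
    (h1 : ∀ t ∈ I, HasDerivAt R1 (-(R1 t)^2 + b * (R2 t)^2) t)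
    (h2 : ∀ t ∈ I, HasDerivAt R2 (-((γ+1)/2) * R1 t * R2 t) t)
    (E : ℝ → ℝ)
    (hE : E = fun t => ((R1 t)^2 + (2*b/(γ-1)) * (R2 t)^2) * (R2 t) ^ (-(4/(γ+1)) : ℝ)) :
    ∀ t ∈ I, ∀ t' ∈ I, E t = E t' := by
  have hγ1 : γ + 1 ≠ 0 := by linarith
  have hγ2 : γ - 1 ≠ 0 := by linarith
  have key : ∀ x ∈ I, HasDerivAt E 0 x := by
    intro x hx
    have hp := hpos x hx
    have hpow : HasDerivAt (fun t => (R2 t) ^ (-(4/(γ+1)) : ℝ))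
        ((-((γ+1)/2) * R1 x * R2 x) * (-(4/(γ+1))) * R2 x ^ ((-(4/(γ+1)) : ℝ) - 1)) x :=
      (h2 x hx).rpow_const (Or.inl hp.ne')
    have hq : HasDerivAt (fun t => (R1 t)^2 + (2*b/(γ-1)) * (R2 t)^2)
        ((2 : ℕ) * R1 x ^ 1 * (-(R1 x)^2 + b * (R2 x)^2)
          + (2*b/(γ-1)) * ((2 : ℕ) * R2 x ^ 1 * (-((γ+1)/2) * R1 x * R2 x))) x :=
      ((h1 x hx).pow 2).add (((h2 x hx).pow 2).const_mul _)
    have hmul := hq.mul hpow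
    rw [hE]
    convert hmul using 1
    case e'_4 => rfl
    case e'_5 => rfl
    case e'_8 => rfl
    have hP1 : R2 x ^ ((-(4/(γ+1)) : ℝ) - 1) * R2 x = R2 x ^ (-(4/(γ+1)) : ℝ) := by
      rw [← rpow_add_one hp.ne']
      ring_nf
    set A := R1 x
    set B := R2 x
    set P := B ^ (-(4/(γ+1)) : ℝ)
    set Q := B ^ ((-(4/(γ+1)) : ℝ) - 1)
    push_cast
    have h4 : (-((γ+1)/2)) * (-(4/(γ+1))) = 2 := by field_simp; ring
    have expand : (2 * A ^ 1 * (-A^2 + b * B^2) + 2*b/(γ-1) * (2 * B ^ 1 * (-((γ+1)/2) * A * B))) * P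
        + (A^2 + 2*b/(γ-1) * B^2) * (-((γ+1)/2) * A * B * -(4/(γ+1)) * Q)
        = (2 * A * (-A^2 + b * B^2) + 2*b/(γ-1) * (2 * B * (-((γ+1)/2) * A * B))) * P
        + (A^2 + 2*b/(γ-1) * B^2) * ((-((γ+1)/2)) * (-(4/(γ+1))) * A * (Q * B)) := by ring
    rw [expand, hP1, h4]
    field_simp
    ring
  intro t ht t' ht'
  -- reduce to ordered case
  have main : ∀ a ∈ I, ∀ c ∈ I, a ≤ c → E c = E a := by
    intro a ha c hc hac
    have hsub : Set.Icc a c ⊆ I := fun y hy => hI.out ha hc hy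
    have := constant_of_has_deriv_right_zero
      (f := E) (a := a) (b := c)
      (fun y hy => ((key y (hsub hy)).continuousAt).continuousWithinAt)
      (fun y hy => ((key y (hsub (Set.Ico_subset_Icc_self hy))).hasDerivWithinAt))
    exact this c (Set.right_mem_Icc.2 hac)
  rcases le_total t t' with h | h
  · exact (main t ht t' ht' h).symm
  · exact main t' ht' t ht h
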